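/- Let m ≥ 1 and let Γ and Γ' be closed subgroups of the torus T^m = (ℝ/ℤ)^m. Define R(Γ) = {a ∈ ℤ^m : a_1·x_1 + … + a_m·x_m = 0 in ℝ/ℤ for all x ∈ Γ}, and similarly R(Γ'). Then Γ ⊆ Γ' if and only if R(Γ') ⊆ R(Γ). -/

import Mathlib

open MeasureTheory ContinuousMap

noncomputable section
namespace Stmt7

variable {m : ℕ}

abbrev G (m : ℕ) := Fin m → AddCircle (1 : ℝ)


variable {m : ℕ}


def chr (a : Fin m → ℤ) : C(G m, ℂ) :=
  ⟨fun y => (AddCircle.toCircle (∑ i, a i • y i) : ℂ),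
    continuous_subtype_val.comp <| AddCircle.continuous_toCircle.comp <|
      continuous_finset_sum _ fun i _ => (continuous_zsmul (a i)).comp (continuous_apply i)⟩

lemma chr_apply (a : Fin m → ℤ) (y : G m) :
    chr a y = (AddCircle.toCircle (∑ i, a i • y i) : ℂ) := rfl

lemma toCircle_eq_one {t : AddCircle (1 : ℝ)} :
    (AddCircle.toCircle t : ℂ) = 1 ↔ t = 0 := by
  constructor
  · intro h
    apply AddCircle.injective_toCircle one_ne_zero
    rw [AddCircle.toCircle_zero]
    exact Subtype.ext (by simpa using h)
  · intro h; rw [h, AddCircle.toCircle_zero, Circle.coe_one]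

lemma chr_eq_one_iff (a : Fin m → ℤ) (y : G m) :
    chr a y = 1 ↔ ∑ i, a i • y i = 0 := toCircle_eq_one

lemma chr_add_apply (a : Fin m → ℤ) (y z : G m) :
    chr a (y + z) = chr a y * chr a z := by
  simp only [chr_apply]
  rw [← Circle.coe_mul, ← AddCircle.toCircle_add]
  congr 2
  simp [smul_add, Finset.sum_add_distrib]

lemma chr_mul (a b : Fin m → ℤ) : chr a * chr b = chr (a + b) := by
  ext y
  simp only [ContinuousMap.mul_apply, chr_apply]
  rw [← Circle.coe_mul, ← AddCircle.toCircle_add]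
  congr 2
  simp [add_smul, Finset.sum_add_distrib]

lemma chr_zero : chr (0 : Fin m → ℤ) = 1 := by
  ext y
  simp [chr_apply]

lemma chr_star (a : Fin m → ℤ) : star (chr a) = chr (-a) := by
  ext y
  have h : AddCircle.toCircle (∑ i, (-a) i • y i)
      = (AddCircle.toCircle (∑ i, a i • y i))⁻¹ := by
    apply eq_inv_of_mul_eq_one_left
    rw [← AddCircle.toCircle_add, ← Finset.sum_add_distrib]
    have : ∑ i, ((-a) i • y i + a i • y i) = (0 : AddCircle (1:ℝ)) := by
      apply Finset.sum_eq_zero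
      intro i _
      simp [neg_smul]
    rw [this, AddCircle.toCircle_zero]
  simp only [ContinuousMap.star_apply, chr_apply, h, Circle.coe_inv_eq_conj]
  rfl



def chSpan (m : ℕ) : Submodule ℂ C(G m, ℂ) := Submodule.span ℂ (Set.range (chr (m := m)))

def chAlg (m : ℕ) : StarSubalgebra ℂ C(G m, ℂ) where
  toSubalgebra := (chSpan m).toSubalgebra
    (Submodule.subset_span ⟨0, chr_zero⟩)
    (by
      intro p q hp hq
      have h : chSpan m * chSpan m ≤ chSpan m := by
        rw [chSpan, Submodule.span_mul_span]
        apply Submodule.span_le.mpr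
        rintro f ⟨g, ⟨a, rfl⟩, h', ⟨b, rfl⟩, rfl⟩
        exact Submodule.subset_span ⟨a + b, (chr_mul a b).symm⟩
      exact h (Submodule.mul_mem_mul hp hq))
  star_mem' := by
    intro p hp
    refine Submodule.span_induction ?_ ?_ ?_ ?_ hp
    · rintro f ⟨a, rfl⟩
      exact Submodule.subset_span ⟨-a, (chr_star a).symm⟩
    · simpa using Submodule.zero_mem (chSpan m)
    · intro f g _ _ hf hg
      rw [star_add]; exact Submodule.add_mem _ hf hg
    · intro c f _ hf
      rw [star_smul]; exact Submodule.smul_mem _ _ hf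

lemma mem_chAlg_iff {p : C(G m, ℂ)} : p ∈ chAlg m ↔ p ∈ chSpan m := Iff.rfl

lemma chAlg_separates : (chAlg m).SeparatesPoints := by
  intro x y hxy
  obtain ⟨i, hi⟩ : ∃ i, x i ≠ y i := by
    by_contra h; push_neg at h; exact hxy (funext h)
  refine ⟨_, ⟨chr (Pi.single i 1), Submodule.subset_span ⟨_, rfl⟩, rfl⟩, ?_⟩
  have key : ∀ z : G m, chr (Pi.single i (1:ℤ)) z = (AddCircle.toCircle (z i) : ℂ) := by
    intro z
    rw [chr_apply]
    congr 2
    rw [Finset.sum_eq_single i]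
    · simp
    · intro j _ hj; simp [Pi.single_eq_of_ne hj]
    · simp
  simp only []
  show chr (Pi.single i 1) x ≠ chr (Pi.single i 1) y
  rw [key, key]
  intro h
  exact hi (AddCircle.injective_toCircle one_ne_zero (Subtype.ext h))

lemma exists_near [inst : Fact ((0:ℝ) < 1)] (f : C(G m, ℂ)) {ε : ℝ} (hε : 0 < ε) :
    ∃ P ∈ chSpan m, ‖f - P‖ < ε := by
  have hdense := ContinuousMap.starSubalgebra_topologicalClosure_eq_top_of_separatesPoints
    (chAlg m) chAlg_separates
  have hf : f ∈ closure ((chAlg m) : Set C(G m, ℂ)) := by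
    have : f ∈ (chAlg m).topologicalClosure := by rw [hdense]; trivial
    exact this
  rw [Metric.mem_closure_iff] at hf
  obtain ⟨P, hP, hd⟩ := hf ε hε
  exact ⟨P, hP, by rwa [← dist_eq_norm]⟩




set_option maxHeartbeats 1000000 in
set_option synthInstance.maxHeartbeats 400000 in
theorem main (m : ℕ) (hm : 1 ≤ m)
    (Γ Γ' : AddSubgroup (Fin m → AddCircle (1 : ℝ)))
    (hΓ : IsClosed (Γ : Set (Fin m → AddCircle (1 : ℝ))))
    (hΓ' : IsClosed (Γ' : Set (Fin m → AddCircle (1 : ℝ)))) :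
    Γ ≤ Γ' ↔
      {a : Fin m → ℤ | ∀ y ∈ Γ', ∑ i, a i • y i = 0}
        ⊆ {a : Fin m → ℤ | ∀ y ∈ Γ, ∑ i, a i • y i = 0} := by
  haveI : Fact ((0:ℝ) < 1) := ⟨one_pos⟩
  constructor
  · intro h a ha y hy
    exact ha y (h hy)
  · intro hR x hxΓ
    by_contra hxΓ'
    -- set up Haar measure on Γ'
    haveI : CompactSpace ↥Γ' := isCompact_iff_compactSpace.mp hΓ'.isCompact
    haveI : LocallyCompactSpace ↥Γ' := inferInstance
    borelize ↥Γ'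
    set μ : Measure ↥Γ' := Measure.addHaar with hμdef
    haveI : μ.IsAddHaarMeasure := Measure.isAddHaarMeasure_addHaarMeasure _
    haveI : IsFiniteMeasure μ := CompactSpace.isFiniteMeasure
    have hμ0 : μ Set.univ ≠ 0 := (IsOpen.measure_pos μ isOpen_univ ⟨0, trivial⟩).ne'
    set c : ℝ := (μ Set.univ).toReal with hcdef
    have hc : 0 < c := ENNReal.toReal_pos hμ0 (measure_ne_top μ _)
    have hint : ∀ (f : ↥Γ' → ℂ), Continuous f → Integrable f μ := fun f hf =>
      hf.integrable_of_hasCompactSupport ((isClosed_tsupport _).isCompact)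
    have hintP : ∀ (P : C(G m, ℂ)) (z : G m), Integrable (fun g : ↥Γ' => P (z + ↑g)) μ :=
      fun P z => hint _ (P.continuous.comp (continuous_const.add continuous_subtype_val))
    have hintP0 : ∀ (P : C(G m, ℂ)), Integrable (fun g : ↥Γ' => P ↑g) μ :=
      fun P => hint _ (P.continuous.comp continuous_subtype_val)
    -- orthogonality
    have horth : ∀ a : Fin m → ℤ, (∃ y ∈ Γ', ∑ i, a i • y i ≠ 0) →
        ∫ g : ↥Γ', chr a ↑g ∂μ = 0 := by
      rintro a ⟨y, hy, hne⟩
      have h1 : chr a y ≠ 1 := fun h => hne ((chr_eq_one_iff a y).mp h)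
      have h2 : ∫ g : ↥Γ', chr a ↑((⟨y, hy⟩ : ↥Γ') + g) ∂μ = ∫ g : ↥Γ', chr a ↑g ∂μ :=
        integral_add_left_eq_self (fun g : ↥Γ' => chr a ↑g) ⟨y, hy⟩
      have h3 : ∫ g : ↥Γ', chr a ↑((⟨y, hy⟩ : ↥Γ') + g) ∂μ
          = chr a y * ∫ g : ↥Γ', chr a ↑g ∂μ := by
        rw [← integral_const_mul]
        congr 1
        funext g
        rw [show ((⟨y, hy⟩ : ↥Γ') + g : ↥Γ') = (⟨y + ↑g, Γ'.add_mem hy g.2⟩ : ↥Γ') from rfl]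
        exact chr_add_apply a y ↑g
      have := h3.symm.trans h2
      rcases mul_eq_zero.mp (by
        have : (chr a y - 1) * ∫ g : ↥Γ', chr a ↑g ∂μ = 0 := by ring_nf; linear_combination this
        exact this) with h | h
      · exact absurd (sub_eq_zero.mp h) h1
      · exact h
    -- invariance of averages for elements of the span
    have hQ : ∀ P ∈ chSpan m,
        ∫ g : ↥Γ', P (x + ↑g) ∂μ = ∫ g : ↥Γ', P (↑g : G m) ∂μ := by
      intro P hP
      refine Submodule.span_induction ?_ ?_ ?_ ?_ hP
      · rintro f ⟨a, rfl⟩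
        by_cases hres : ∀ y ∈ Γ', ∑ i, a i • y i = 0
        · have hax : chr a x = 1 := (chr_eq_one_iff a x).mpr (hR hres x hxΓ)
          congr 1
          funext g
          rw [chr_add_apply, hax, one_mul]
        · push_neg at hres
          have h0 := horth a hres
          have : ∫ g : ↥Γ', chr a (x + ↑g) ∂μ = chr a x * ∫ g : ↥Γ', chr a ↑g ∂μ := by
            rw [← integral_const_mul]
            congr 1; funext g; exact chr_add_apply a x ↑g
          rw [this, h0, mul_zero]
      · simp
      · intro f g hf hg ihf ihg
        have : ∀ z : G m, (f + g) z = f z + g z := fun z => rfl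
        simp only [ContinuousMap.add_apply]
        rw [integral_add (hintP f x) (hintP g x), integral_add (hintP0 f) (hintP0 g), ihf, ihg]
      · intro t f hf ihf
        simp only [ContinuousMap.smul_apply]
        rw [integral_smul, integral_smul, ihf]
    -- Urysohn function
    have hdisj : Disjoint (Γ' : Set (G m)) ((fun y => x + y) '' (Γ' : Set (G m))) := by
      rw [Set.disjoint_left]
      rintro z hz ⟨w, hw, rfl⟩
      exact hxΓ' (by simpa using Γ'.sub_mem hz hw)
    have hclosed : IsClosed ((fun y => x + y) '' (Γ' : Set (G m))) :=
      (Homeomorph.addLeft x).isClosedMap _ hΓ'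
    obtain ⟨f, hf0, hf1, hficc⟩ := exists_continuous_zero_one_of_isCompact
      hΓ'.isCompact hclosed hdisj
    set fc : C(G m, ℂ) := ⟨fun y => (f y : ℂ), Complex.continuous_ofReal.comp f.continuous⟩
      with hfcdef
    obtain ⟨P, hPmem, hPnear⟩ := exists_near (m := m) fc (ε := 1/2) (by norm_num)
    -- the two integrals of fc
    have hI1 : ∫ g : ↥Γ', fc (x + ↑g) ∂μ = (c : ℂ) := by
      have : ∀ g : ↥Γ', fc (x + ↑g) = 1 := by
        intro g
        have : f (x + ↑g) = 1 := hf1 ⟨↑g, g.2, rfl⟩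
        simp [hfcdef, this]
      rw [show (fun g : ↥Γ' => fc (x + ↑g)) = fun _ => (1 : ℂ) from funext this]
      simp [hcdef, Measure.real]
    have hI0 : ∫ g : ↥Γ', fc (↑g : G m) ∂μ = 0 := by
      have : ∀ g : ↥Γ', fc (↑g : G m) = 0 := by
        intro g
        have : f (↑g : G m) = 0 := hf0 g.2
        simp [hfcdef, this]
      rw [show (fun g : ↥Γ' => fc (↑g : G m)) = fun _ => (0 : ℂ) from funext this]
      simp
    -- bounds
    have hbound : ∀ z : G m, ‖∫ g : ↥Γ', fc (z + ↑g) ∂μ - ∫ g : ↥Γ', P (z + ↑g) ∂μ‖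
        ≤ ‖fc - P‖ * c := by
      intro z
      rw [← integral_sub (hintP fc z) (hintP P z)]
      refine norm_integral_le_of_norm_le_const ?_
      filter_upwards with g
      calc ‖fc (z + ↑g) - P (z + ↑g)‖ = ‖(fc - P) (z + ↑g)‖ := by
            simp [ContinuousMap.sub_apply]
        _ ≤ ‖fc - P‖ := ContinuousMap.norm_coe_le_norm _ _
    have hbound0 : ‖∫ g : ↥Γ', fc (↑g : G m) ∂μ - ∫ g : ↥Γ', P (↑g : G m) ∂μ‖
        ≤ ‖fc - P‖ * c := by
      rw [← integral_sub (hintP0 fc) (hintP0 P)]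
      refine norm_integral_le_of_norm_le_const ?_
      filter_upwards with g
      calc ‖fc (↑g : G m) - P (↑g : G m)‖ = ‖(fc - P) (↑g : G m)‖ := by
            simp [ContinuousMap.sub_apply]
        _ ≤ ‖fc - P‖ := ContinuousMap.norm_coe_le_norm _ _
    -- final contradiction
    have hQP := hQ P hPmem
    have key : (c : ℂ) = (∫ g : ↥Γ', fc (x + ↑g) ∂μ - ∫ g : ↥Γ', P (x + ↑g) ∂μ)
        + (∫ g : ↥Γ', P (↑g : G m) ∂μ - ∫ g : ↥Γ', fc (↑g : G m) ∂μ) := by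
      rw [hI1, hI0, hQP]; ring
    have : c ≤ ‖fc - P‖ * c + ‖fc - P‖ * c := by
      calc c = ‖(c : ℂ)‖ := by simp [abs_of_pos hc]
        _ ≤ _ := by
            rw [key]
            refine (norm_add_le _ _).trans (add_le_add (hbound x) ?_)
            rw [← norm_neg]; simpa [neg_sub] using hbound0
    have hlt : ‖fc - P‖ * c + ‖fc - P‖ * c < (1/2) * c + (1/2) * c := by
      have := mul_lt_mul_of_pos_right hPnear hc
      linarith
    linarith

end Stmt7
end

/-- For closed subgroups `Γ, Γ'` of the torus `T^m = (ℝ/ℤ)^m`, one has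
`Γ ⊆ Γ'` if and only if `R(Γ') ⊆ R(Γ)`, where `R(·)` denotes the group of
resonances (characters vanishing on the subgroup). -/
theorem stmt_7 (m : ℕ) (hm : 1 ≤ m)
    (Γ Γ' : AddSubgroup (Fin m → AddCircle (1 : ℝ)))
    (hΓ : IsClosed (Γ : Set (Fin m → AddCircle (1 : ℝ))))
    (hΓ' : IsClosed (Γ' : Set (Fin m → AddCircle (1 : ℝ)))) :
    Γ ≤ Γ' ↔
      {a : Fin m → ℤ | ∀ y ∈ Γ', ∑ i, a i • y i = 0}
        ⊆ {a : Fin m → ℤ | ∀ y ∈ Γ, ∑ i, a i • y i = 0} := by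
  exact Stmt7.main m hm Γ Γ' hΓ hΓ'
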